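/- Let a_1, …, a_n ∈ ℝ^N be linearly dependent, let A_n be the n×N matrix whose s-th row is a_sᵀ and G_n := A_n A_nᵀ. Then the quasi projector Q_n := A_nᵀ · adj(G_n) · A_n is the zero matrix. -/

import Mathlib

open Matrix BigOperators

/-- The quasi projector of the vectors arranged as the rows of `B`:
`Bᵀ · adj(BBᵀ) · B`. -/
noncomputable def quasiOf {ι : Type*} [Fintype ι] [DecidableEq ι] {N : ℕ}
    (B : Matrix ι (Fin N) ℝ) : Matrix (Fin N) (Fin N) ℝ :=
  Bᵀ * (B * Bᵀ).adjugate * B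

/-- For a linearly dependent set of vectors `a_1, …, a_n`, the quasi projector
`Q_n = A_nᵀ · adj(A_n A_nᵀ) · A_n` is the zero matrix. -/
theorem quasi_projector_of_dependent_eq_zero {n N : ℕ}
    (a : Fin n → Fin N → ℝ) (ha : ¬ LinearIndependent ℝ a) :
    quasiOf (Matrix.of a) = 0 := by
  set B : Matrix (Fin n) (Fin N) ℝ := Matrix.of a
  set G : Matrix (Fin n) (Fin n) ℝ := B * Bᵀ
  -- det G = 0
  obtain ⟨g, hg, i, hgi⟩ := Fintype.not_linearIndependent_iff.mp ha
  have hvB : g ᵥ* B = 0 := by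
    funext j
    simpa [Matrix.vecMul, dotProduct, B] using congrFun hg j
  have hdet : G.det = 0 := by
    rw [← Matrix.exists_vecMul_eq_zero_iff]
    exact ⟨g, Function.ne_iff.mpr ⟨i, hgi⟩, by
      simp [G, ← Matrix.vecMul_vecMul, hvB]⟩
  have hadjG : G.adjugate * G = 0 := by
    rw [Matrix.adjugate_mul, hdet, zero_smul]
  set Q : Matrix (Fin N) (Fin N) ℝ := quasiOf B with hQ
  have hQt : Qᵀ = Bᵀ * G.adjugate * B := by
    have : Gᵀ = G := by simp [G, Matrix.transpose_mul]
    simp [hQ, quasiOf, Matrix.transpose_mul, Matrix.adjugate_transpose, this,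
      Matrix.mul_assoc]
    rfl
  have key : Qᵀ * Q = 0 := by
    rw [hQt, hQ]
    show Bᵀ * G.adjugate * B * (Bᵀ * G.adjugate * B) = 0
    have : Bᵀ * G.adjugate * B * (Bᵀ * G.adjugate * B)
        = Bᵀ * ((G.adjugate * G) * (G.adjugate * B)) := by
      simp only [G, Matrix.mul_assoc]
    rw [this, hadjG, Matrix.zero_mul, Matrix.mul_zero]
  have : Qᴴ * Q = 0 := by
    rw [Matrix.conjTranspose_eq_transpose_of_trivial]; exact key
  exact Matrix.conjTranspose_mul_self_eq_zero.mp this
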